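/- Let S be a real symmetric n×n matrix having an eigenvalue η > 1, let a ∈ (0, 1], set b := 2a − a² and c := (1 − a)², and let M be the 2n×2n block matrix M = [[b·S, c·S], [I, 0]]. Then M has a real eigenvalue ϱ > 1. (Indeed, if v is an eigenvector of S for η and ϱ > 1 is the positive root of ϱ² − b·η·ϱ − c·η = 0, then (ϱ·v, v) is an eigenvector of M for ϱ.) -/
import Mathlib


/-- if the symmetric matrix `S` has an eigenvalue `η > 1`, then the
inertial iteration matrix `M = [[b·S, c·S], [I, 0]]` has a real eigenvalue `ϱ > 1`. -/
theorem stmt15 {n : ℕ} (S : Matrix (Fin n) (Fin n) ℝ) (hSsymm : S.IsSymm)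
    (η : ℝ) (hη : 1 < η)
    (v : Fin n → ℝ) (hv : v ≠ 0) (hSv : S.mulVec v = η • v)
    (a : ℝ) (ha0 : 0 < a) (ha1 : a ≤ 1)
    (b c : ℝ) (hb : b = 2 * a - a ^ 2) (hc : c = (1 - a) ^ 2)
    (M : Matrix (Fin n ⊕ Fin n) (Fin n ⊕ Fin n) ℝ)
    (hM : M = Matrix.fromBlocks (b • S) (c • S) 1 0) :
    ∃ ϱ : ℝ, 1 < ϱ ∧ ϱ ^ 2 - b * η * ϱ - c * η = 0 ∧
      ∃ w : Fin n ⊕ Fin n → ℝ, w ≠ 0 ∧ M.mulVec w = ϱ • w := by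
  have hb0 : 0 < b := by nlinarith
  have hc0 : 0 ≤ c := by nlinarith
  have hbc : b + c = 1 := by nlinarith
  set D : ℝ := (b * η) ^ 2 + 4 * (c * η) with hD
  have hD0 : 0 ≤ D := by nlinarith
  set s : ℝ := Real.sqrt D with hs
  have hs0 : 0 ≤ s := Real.sqrt_nonneg D
  have hs2 : s ^ 2 = D := Real.sq_sqrt hD0
  refine ⟨(b * η + s) / 2, ?_, ?_, ?_⟩
  · nlinarith [sq_nonneg (s + 2 - b * η), sq_nonneg (s - 2 + b * η)]
  · field_simp
    nlinarith
  · set ϱ : ℝ := (b * η + s) / 2 with hϱ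
    have hroot : ϱ ^ 2 = b * η * ϱ + c * η := by
      field_simp [hϱ]; nlinarith
    refine ⟨Sum.elim (ϱ • v) v, ?_, ?_⟩
    · intro h
      apply hv
      funext i
      have := congrFun h (Sum.inr i)
      simpa using this
    · rw [hM, Matrix.fromBlocks_mulVec]
      funext i
      cases i with
      | inl i =>
        simp [Matrix.smul_mulVec, Matrix.mulVec_smul, hSv, hroot]
        have hs2' : s ^ 2 = (b * η) ^ 2 + 4 * (c * η) := by rw [hs2]
        linear_combination (-(v i) / 4) * hs2'
      | inr i =>
        simp [Matrix.one_mulVec]
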